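/- No nonempty open subset of a complete metric linear space is shy. -/

import Mathlib

open MeasureTheory

/-- A Borel set `S` is *shy* if there is a compactly supported Borel probability
measure `μ` such that every translate of `S` has `μ`-measure zero. -/
def IsShyBorel {X : Type*} [AddGroup X] [TopologicalSpace X] [MeasurableSpace X]
    (S : Set X) : Prop :=
  MeasurableSet S ∧ ∃ μ : Measure X, IsProbabilityMeasure μ ∧
    (∃ K : Set X, IsCompact K ∧ μ Kᶜ = 0) ∧ ∀ x : X, μ ((· + x) '' S) = 0

/-- A set is *shy* if it is contained in a shy Borel set. -/
def IsShy {X : Type*} [AddGroup X] [TopologicalSpace X] [MeasurableSpace X]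
    (S : Set X) : Prop :=
  ∃ T, S ⊆ T ∧ IsShyBorel T

/-- A set is *prevalent* if its complement is shy. -/
def Prevalent {X : Type*} [AddGroup X] [TopologicalSpace X] [MeasurableSpace X]
    (S : Set X) : Prop :=
  IsShy Sᶜ

theorem open_not_shy {X : Type*} [AddCommGroup X] [Module ℝ X] [MetricSpace X] [CompleteSpace X]
    [IsTopologicalAddGroup X] [ContinuousSMul ℝ X] [MeasurableSpace X] [BorelSpace X]
    (U : Set X) (hU : IsOpen U) (hne : U.Nonempty) : ¬ IsShy U := by
  rintro ⟨T, hUT, hTmeas, μ, hprob, ⟨K, hK, hKc⟩, hT⟩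
  obtain ⟨x₀, hx₀⟩ := hne
  have hopen : ∀ k : X, IsOpen ((· + (k - x₀)) '' U) :=
    fun k => (Homeomorph.addRight (k - x₀)).isOpenMap U hU
  have hcover : K ⊆ ⋃ k ∈ K, (· + (k - x₀)) '' U := by
    intro k hk
    simp only [Set.mem_iUnion, Set.mem_image]
    exact ⟨k, hk, x₀, hx₀, by abel⟩
  obtain ⟨t, hts, htfin, htcover⟩ :=
    hK.elim_finite_subcover_image (fun k _ => hopen k) hcover
  have hnullK : μ K = 0 := by
    refine le_antisymm ((measure_mono htcover).trans_eq ?_) zero_le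
    rw [measure_biUnion_null_iff htfin.countable]
    intro k _
    refine le_antisymm ((measure_mono (Set.image_mono hUT)).trans_eq ?_) zero_le
    exact hT (k - x₀)
  have : (1 : ENNReal) ≤ 0 := by
    calc (1 : ENNReal) = μ Set.univ := (measure_univ (μ := μ)).symm
      _ = μ (K ∪ Kᶜ) := by rw [Set.union_compl_self]
      _ ≤ μ K + μ Kᶜ := measure_union_le _ _
      _ = 0 := by rw [hnullK, hKc, add_zero]
  simp at this
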